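/- Let E be a normed real vector space and let q, n : ℝ → (E →L[ℝ] E →L[ℝ] ℝ) be maps into continuous bilinear forms that are differentiable at t = 0, with q_t and n_t symmetric for every t. Let u : ℝ → E and λ : ℝ → ℝ be differentiable at t = 0, suppose n₀(u₀, u₀) = 1, and suppose that for all t in a neighborhood of 0 and all v ∈ E one has q_t(u_t, v) = λ_t · n_t(u_t, v). Then λ'(0) = q̇₀(u₀, u₀) − λ(0) · ṅ₀(u₀, u₀), where q̇₀ and ṅ₀ denote the derivatives of t ↦ q_t and t ↦ n_t at t = 0. -/

import Mathlib

/-- Feynman–Hellmann formula: if `q_t`, `n_t` are families of symmetric continuous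
bilinear forms differentiable at `t = 0`, `(λ_t, u_t)` is a differentiable eigenbranch,
i.e. `q_t(u_t, v) = λ_t n_t(u_t, v)` for all `v` and `t` near `0`, normalized by
`n₀(u₀,u₀) = 1`, then `λ'(0) = q̇₀(u₀,u₀) − λ(0) ṅ₀(u₀,u₀)`. -/
theorem stmt1 {E : Type*} [NormedAddCommGroup E] [NormedSpace ℝ E]
    (q n : ℝ → E →L[ℝ] E →L[ℝ] ℝ)
    (hq : DifferentiableAt ℝ q 0) (hn : DifferentiableAt ℝ n 0)
    (hqsymm : ∀ t x y, q t x y = q t y x) (hnsymm : ∀ t x y, n t x y = n t y x)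
    (u : ℝ → E) (lam : ℝ → ℝ)
    (hu : DifferentiableAt ℝ u 0) (hlam : DifferentiableAt ℝ lam 0)
    (hnorm : n 0 (u 0) (u 0) = 1)
    (heig : ∀ᶠ t in nhds (0 : ℝ), ∀ v : E, q t (u t) v = lam t * n t (u t) v) :
    deriv lam 0 = deriv q 0 (u 0) (u 0) - lam 0 * deriv n 0 (u 0) (u 0) := by
  set u' := deriv u 0 with hu'
  -- derivative of F t = q t (u t) (u 0)
  have hF : HasDerivAt (fun t => q t (u t) (u 0))
      ((deriv q 0 (u 0) + q 0 u') (u 0) + (q 0 (u 0)) 0) 0 :=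
    ((DifferentiableAt.hasDerivAt (𝕜 := ℝ) (F := E →L[ℝ] E →L[ℝ] ℝ) hq).clm_apply hu.hasDerivAt).clm_apply (hasDerivAt_const (0 : ℝ) (u 0))
  -- derivative of G t = lam t * n t (u t) (u 0)
  have hN : HasDerivAt (fun t => n t (u t) (u 0))
      ((deriv n 0 (u 0) + n 0 u') (u 0) + (n 0 (u 0)) 0) 0 :=
    ((DifferentiableAt.hasDerivAt (𝕜 := ℝ) (F := E →L[ℝ] E →L[ℝ] ℝ) hn).clm_apply hu.hasDerivAt).clm_apply (hasDerivAt_const (0 : ℝ) (u 0))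
  have hG : HasDerivAt (fun t => lam t * n t (u t) (u 0))
      (deriv lam 0 * (n 0 (u 0) (u 0))
        + lam 0 * ((deriv n 0 (u 0) + n 0 u') (u 0) + (n 0 (u 0)) 0)) 0 :=
    hlam.hasDerivAt.mul hN
  -- F and G agree near 0
  have heq : (fun t => q t (u t) (u 0)) =ᶠ[nhds (0 : ℝ)]
      (fun t => lam t * n t (u t) (u 0)) := heig.mono fun t ht => ht (u 0)
  have hF' : HasDerivAt (fun t => lam t * n t (u t) (u 0))
      ((deriv q 0 (u 0) + q 0 u') (u 0) + (q 0 (u 0)) 0) 0 :=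
    hF.congr_of_eventuallyEq heq.symm
  have key := hF'.unique hG
  have heig0 := heig.self_of_nhds
  have hcross : q 0 u' (u 0) = lam 0 * n 0 u' (u 0) := by
    rw [hqsymm 0 u' (u 0), heig0 u', hnsymm 0 (u 0) u']
  simp only [ContinuousLinearMap.add_apply, map_zero, add_zero, hnorm, mul_one] at key
  rw [hcross] at key
  linarith [key]
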